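/- For m ≥ 1 define β_m = F₀(β_{m−1}) ∪ F₁(β_{m−1}) ∪ F₂(β_{m−1}) ⊆ V_{m+2}, with conductances c^{β_m} computed at level m+2. Then for distinct x, y ∈ β_m: (i) if there is no word w of length m with {x, y} ⊆ F_w(β₀), then c^{β_m}_{x,y} = 0; (ii) if x = F_w(x̃) and y = F_w(ỹ) for some word w of length m and distinct x̃, ỹ ∈ β₀, then c^{β_m}_{x,y} = (5/3)^m · c^{β₀}_{x̃,ỹ}, where c^{β₀} denotes the conductances of β₀ computed at level 2. -/

import Mathlib

open scoped BigOperators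

noncomputable section

namespace SGPaper

/-- The three corners of the Sierpinski gasket:
`q₀ = (1/2, √3/2)`, `q₁ = (0,0)`, `q₂ = (1,0)`. -/
def q : Fin 3 → ℝ × ℝ
  | 0 => (1 / 2, Real.sqrt 3 / 2)
  | 1 => (0, 0)
  | 2 => (1, 0)

/-- The contraction map towards corner `i`: `F_i(x) = (x + q_i)/2`. -/
def Fmap (i : Fin 3) (x : ℝ × ℝ) : ℝ × ℝ := (2⁻¹ : ℝ) • (x + q i)

/-- `Fword w = F_{w₁} ∘ ⋯ ∘ F_{w_m}` for the word `w = w₁⋯w_m`. -/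
def Fword (w : List (Fin 3)) : ℝ × ℝ → ℝ × ℝ :=
  w.foldr (fun i f => Fmap i ∘ f) id

/-- The level-`m` vertex set of the Sierpinski gasket:
`V_m = ⋃_{|w| = m} F_w({q₀, q₁, q₂})`. -/
def V (m : ℕ) : Set (ℝ × ℝ) :=
  {x | ∃ w : List (Fin 3), w.length = m ∧ ∃ i : Fin 3, x = Fword w (q i)}

/-- `x` and `y` are `m`-neighbors: they are distinct and belong to a common
level-`m` cell `F_w({q₀, q₁, q₂})`. -/
def Nbr (m : ℕ) (x y : ℝ × ℝ) : Prop :=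
  x ≠ y ∧ ∃ w : List (Fin 3), w.length = m ∧
    (∃ i : Fin 3, x = Fword w (q i)) ∧ (∃ j : Fin 3, y = Fword w (q j))

/-- The value `(u x - u y)²` on the unordered pair `{x, y}`. -/
def edgeVal (u : ℝ × ℝ → ℝ) : Sym2 (ℝ × ℝ) → ℝ :=
  Sym2.lift ⟨fun x y => (u x - u y) ^ 2, fun _ _ => by ring⟩

/-- The unordered pair `e` is an edge of the level-`m` graph `Γ_m`. -/
def IsEdge (m : ℕ) (e : Sym2 (ℝ × ℝ)) : Prop :=
  ∃ x y : ℝ × ℝ, Nbr m x y ∧ e = s(x, y)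

/-- The level-`m` graph energy: `E_m(u) = (5/3)^m Σ (u x − u y)²`, the sum being over
unordered `m`-neighbor pairs `{x, y}` (a finite set, so `tsum` is the honest sum). -/
def Energy (m : ℕ) (u : ℝ × ℝ → ℝ) : ℝ :=
  (5 / 3 : ℝ) ^ m * ∑' e : {e : Sym2 (ℝ × ℝ) // IsEdge m e}, edgeVal u e

/-- `Q_E(v)`: minimal level-`m` energy among functions `u : V_m → ℝ` agreeing
with `v` on `E` (the minimum is attained, so it equals this infimum). -/
def Q (m : ℕ) (E : Set (ℝ × ℝ)) (v : ℝ × ℝ → ℝ) : ℝ :=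
  sInf {r | ∃ u : ℝ × ℝ → ℝ, (∀ x ∈ E, u x = v x) ∧ r = Energy m u}

/-- Indicator function of the point `z`. -/
def ind (z : ℝ × ℝ) : ℝ × ℝ → ℝ := fun t => if t = z then 1 else 0

/-- The conductance `c^E_{x,y} = (Q_E(𝟙_x) + Q_E(𝟙_y) − Q_E(𝟙_x + 𝟙_y))/2`
between `x, y ∈ E`, computed at level `m`. -/
def cond (m : ℕ) (E : Set (ℝ × ℝ)) (x y : ℝ × ℝ) : ℝ :=
  (Q m E (ind x) + Q m E (ind y) - Q m E (ind x + ind y)) / 2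

/-- The points `p₀ = F₀F₂(q₁)`, `p₁ = F₁F₀(q₂)`, `p₂ = F₂F₁(q₀)`. -/
def p (i : Fin 3) : ℝ × ℝ := Fmap i (Fmap (i + 2) (q (i + 1)))

/-- The six-point set `β₀ = {q₀, q₁, q₂, p₀, p₁, p₂} ⊆ V₂`. -/
def beta0 : Set (ℝ × ℝ) := {q 0, q 1, q 2, p 0, p 1, p 2}

/-- `β_m = F₀(β_{m−1}) ∪ F₁(β_{m−1}) ∪ F₂(β_{m−1})`. -/
def betaSet : ℕ → Set (ℝ × ℝ)
  | 0 => beta0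
  | m + 1 => ⋃ i : Fin 3, Fmap i '' betaSet m

/-! ### Barycentric coordinates -/

def lam : Fin 3 → ℝ × ℝ → ℝ
  | 0 => fun z => 2 * z.2 / Real.sqrt 3
  | 1 => fun z => 1 - z.1 - z.2 / Real.sqrt 3
  | 2 => fun z => z.1 - z.2 / Real.sqrt 3

lemma sqrt3_pos : (0:ℝ) < Real.sqrt 3 := Real.sqrt_pos.2 (by norm_num)

lemma sqrt3_ne : (Real.sqrt 3) ≠ 0 := ne_of_gt sqrt3_pos

lemma sq_sqrt3 : Real.sqrt 3 * Real.sqrt 3 = 3 :=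
  Real.mul_self_sqrt (by norm_num)

lemma lam_q (i j : Fin 3) : lam i (q j) = if i = j then 1 else 0 := by
  fin_cases i <;> fin_cases j <;>
    first
      | (simp [lam, q]; done)
      | (simp [lam, q]; field_simp; try ring)

lemma lam_mid (i : Fin 3) (z w : ℝ × ℝ) :
    lam i ((2⁻¹ : ℝ) • (z + w)) = (lam i z + lam i w) / 2 := by
  fin_cases i <;> simp [lam, Prod.smul_def, Prod.fst_add, Prod.snd_add] <;> ring

lemma lam_Fmap (i j : Fin 3) (z : ℝ × ℝ) :
    lam i (Fmap j z) = (lam i z + if i = j then 1 else 0) / 2 := by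
  rw [Fmap, lam_mid, lam_q]

lemma lam_sum (z : ℝ × ℝ) : lam 0 z + lam 1 z + lam 2 z = 1 := by
  simp [lam]; ring

lemma recon (z : ℝ × ℝ) :
    z = lam 0 z • q 0 + lam 1 z • q 1 + lam 2 z • q 2 := by
  have h := sqrt3_ne
  ext <;> simp [lam, q, Prod.smul_def] <;> field_simp <;> ring

def inT (z : ℝ × ℝ) : Prop := ∀ i, 0 ≤ lam i z

lemma inT_q (i : Fin 3) : inT (q i) := by
  intro j; rw [lam_q]; split <;> norm_num

lemma inT_Fmap (i : Fin 3) {z : ℝ × ℝ} (hz : inT z) : inT (Fmap i z) := by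
  intro j; rw [lam_Fmap]
  have := hz j
  split <;> linarith

lemma lam_Fmap_self (i : Fin 3) {z : ℝ × ℝ} (hz : inT z) :
    1/2 ≤ lam i (Fmap i z) := by
  rw [lam_Fmap]; simp; linarith [hz i]

lemma overlap {i j : Fin 3} (hij : i ≠ j) {z : ℝ × ℝ} (hz : inT z)
    (hi : 1/2 ≤ lam i z) (hj : 1/2 ≤ lam j z) :
    z = (2⁻¹ : ℝ) • (q i + q j) := by
  have hs := lam_sum z
  have h0 := hz 0; have h1 := hz 1; have h2 := hz 2
  have key : ∀ k : Fin 3, k = 0 ∨ k = 1 ∨ k = 2 := by decide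
  rcases key i with rfl | rfl | rfl <;> rcases key j with rfl | rfl | rfl
  · exact absurd rfl hij
  · have e0 : lam 0 z = 1/2 := by linarith
    have e1 : lam 1 z = 1/2 := by linarith
    have e2 : lam 2 z = 0 := by linarith
    calc z = lam 0 z • q 0 + lam 1 z • q 1 + lam 2 z • q 2 := recon z
    _ = (2⁻¹ : ℝ) • (q 0 + q 1) := by rw [e0, e1, e2]; module
  · have e0 : lam 0 z = 1/2 := by linarith
    have e2 : lam 2 z = 1/2 := by linarith
    have e1 : lam 1 z = 0 := by linarith
    calc z = lam 0 z • q 0 + lam 1 z • q 1 + lam 2 z • q 2 := recon z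
    _ = (2⁻¹ : ℝ) • (q 0 + q 2) := by rw [e0, e1, e2]; module
  · have e0 : lam 0 z = 1/2 := by linarith
    have e1 : lam 1 z = 1/2 := by linarith
    have e2 : lam 2 z = 0 := by linarith
    calc z = lam 0 z • q 0 + lam 1 z • q 1 + lam 2 z • q 2 := recon z
    _ = (2⁻¹ : ℝ) • (q 1 + q 0) := by rw [e0, e1, e2]; module
  · exact absurd rfl hij
  · have e1 : lam 1 z = 1/2 := by linarith
    have e2 : lam 2 z = 1/2 := by linarith
    have e0 : lam 0 z = 0 := by linarith
    calc z = lam 0 z • q 0 + lam 1 z • q 1 + lam 2 z • q 2 := recon z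
    _ = (2⁻¹ : ℝ) • (q 1 + q 2) := by rw [e0, e1, e2]; module
  · have e0 : lam 0 z = 1/2 := by linarith
    have e2 : lam 2 z = 1/2 := by linarith
    have e1 : lam 1 z = 0 := by linarith
    calc z = lam 0 z • q 0 + lam 1 z • q 1 + lam 2 z • q 2 := recon z
    _ = (2⁻¹ : ℝ) • (q 2 + q 0) := by rw [e0, e1, e2]; module
  · have e1 : lam 1 z = 1/2 := by linarith
    have e2 : lam 2 z = 1/2 := by linarith
    have e0 : lam 0 z = 0 := by linarith
    calc z = lam 0 z • q 0 + lam 1 z • q 1 + lam 2 z • q 2 := recon z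
    _ = (2⁻¹ : ℝ) • (q 2 + q 1) := by rw [e0, e1, e2]; module
  · exact absurd rfl hij

/-! ### Basic facts about the maps -/

lemma Fmap_inj (i : Fin 3) : Function.Injective (Fmap i) := by
  intro a b h
  have h2 : a + q i = b + q i :=
    smul_right_injective (ℝ × ℝ) (by norm_num : (2⁻¹ : ℝ) ≠ 0) h
  exact add_right_cancel h2

def Ginv (i : Fin 3) (z : ℝ × ℝ) : ℝ × ℝ := (2 : ℝ) • z - q i

lemma Ginv_Fmap (i : Fin 3) (z : ℝ × ℝ) : Ginv i (Fmap i z) = z := by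
  rw [Ginv, Fmap, smul_smul]
  norm_num

lemma Fmap_Ginv (i : Fin 3) (z : ℝ × ℝ) : Fmap i (Ginv i z) = z := by
  rw [Ginv, Fmap, sub_add_cancel, smul_smul]
  norm_num

lemma Ginv_inj (i : Fin 3) : Function.Injective (Ginv i) := by
  intro a b h
  have : Fmap i (Ginv i a) = Fmap i (Ginv i b) := by rw [h]
  rwa [Fmap_Ginv, Fmap_Ginv] at this

lemma Fmap_q (i : Fin 3) : Fmap i (q i) = q i := by
  have : Ginv i (q i) = q i := by
    rw [Ginv, two_smul]; abel
  conv_lhs => rw [← this, Fmap_Ginv]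

lemma Fword_nil : Fword [] = id := rfl

lemma Fword_cons (i : Fin 3) (w : List (Fin 3)) :
    Fword (i :: w) = Fmap i ∘ Fword w := rfl

lemma inT_Fword (w : List (Fin 3)) {z : ℝ × ℝ} (hz : inT z) : inT (Fword w z) := by
  induction w with
  | nil => exact hz
  | cons i w ihw => exact inT_Fmap i ihw

/-! ### The vertex sets -/

lemma V_zero : V 0 = {x | ∃ i : Fin 3, x = q i} := by
  ext x
  constructor
  · rintro ⟨w, hw, i, rfl⟩
    rw [List.length_eq_zero_iff] at hw
    subst hw; exact ⟨i, rfl⟩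
  · rintro ⟨i, rfl⟩
    exact ⟨[], rfl, i, rfl⟩

lemma V_succ (n : ℕ) : V (n + 1) = ⋃ i : Fin 3, Fmap i '' V n := by
  ext x
  constructor
  · rintro ⟨w, hw, i, rfl⟩
    match w, hw with
    | (j :: w'), hw =>
      refine Set.mem_iUnion.2 ⟨j, ⟨Fword w' (q i), ⟨w', by simpa using hw, i, rfl⟩, rfl⟩⟩
  · intro hx
    obtain ⟨j, ⟨y, ⟨w', hw', i, rfl⟩, rfl⟩⟩ := Set.mem_iUnion.1 hx
    exact ⟨j :: w', by simp [hw'], i, rfl⟩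

lemma V_finite (n : ℕ) : (V n).Finite := by
  induction n with
  | zero =>
    apply Set.Finite.subset (Set.finite_range q)
    rw [V_zero]; rintro x ⟨i, rfl⟩; exact ⟨i, rfl⟩
  | succ n ih =>
    rw [V_succ]
    exact Set.finite_iUnion fun i => ih.image _

lemma inT_V {n : ℕ} {z : ℝ × ℝ} (hz : z ∈ V n) : inT z := by
  obtain ⟨w, hw, i, rfl⟩ := hz
  exact inT_Fword w (inT_q i)

/-! ### Edges -/

lemma edgeVal_mk (u : ℝ × ℝ → ℝ) (x y : ℝ × ℝ) :
    edgeVal u s(x, y) = (u x - u y) ^ 2 := rfl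

lemma edgeVal_nonneg (u : ℝ × ℝ → ℝ) (e : Sym2 (ℝ × ℝ)) : 0 ≤ edgeVal u e := by
  induction e using Sym2.ind with
  | _ x y => rw [edgeVal_mk]; positivity

lemma edge_finite (m : ℕ) : {e | IsEdge m e}.Finite := by
  apply Set.Finite.subset (((V_finite m).prod (V_finite m)).image (fun p : (ℝ × ℝ) × (ℝ × ℝ) => s(p.1, p.2)))
  rintro e ⟨x, y, ⟨hxy, w, hw, ⟨i, hx⟩, ⟨j, hy⟩⟩, rfl⟩
  exact ⟨(x, y), ⟨⟨w, hw, i, hx⟩, ⟨w, hw, j, hy⟩⟩, rfl⟩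

lemma edge_subtype_finite (m : ℕ) : Finite {e : Sym2 (ℝ × ℝ) // IsEdge m e} :=
  (edge_finite m).to_subtype

lemma edge_in_V {m : ℕ} {e : Sym2 (ℝ × ℝ)} (he : IsEdge m e) :
    ∃ x y : ℝ × ℝ, x ∈ V m ∧ y ∈ V m ∧ x ≠ y ∧ e = s(x, y) := by
  obtain ⟨x, y, ⟨hxy, w, hw, ⟨i, hx⟩, ⟨j, hy⟩⟩, rfl⟩ := he
  exact ⟨x, y, ⟨w, hw, i, hx⟩, ⟨w, hw, j, hy⟩, hxy, rfl⟩

/-! ### Energy basics -/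

lemma energy_nonneg (m : ℕ) (u : ℝ × ℝ → ℝ) : 0 ≤ Energy m u := by
  apply mul_nonneg (by positivity)
  exact tsum_nonneg fun e => edgeVal_nonneg u e

lemma energy_zero (m : ℕ) : Energy m (fun _ => 0) = 0 := by
  rw [Energy]
  have : ∀ e : {e : Sym2 (ℝ × ℝ) // IsEdge m e}, edgeVal (fun _ => 0) (e : Sym2 (ℝ × ℝ)) = 0 := by
    rintro ⟨e, he⟩
    induction e using Sym2.ind with
    | _ x y => simp [edgeVal_mk]
  rw [tsum_congr this, tsum_zero, mul_zero]

lemma energy_congr {m : ℕ} {u u' : ℝ × ℝ → ℝ} (h : ∀ z ∈ V m, u z = u' z) :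
    Energy m u = Energy m u' := by
  rw [Energy, Energy]
  congr 1
  apply tsum_congr
  rintro ⟨e, he⟩
  obtain ⟨x, y, hx, hy, hxy, rfl⟩ := edge_in_V he
  simp only [edgeVal_mk, h x hx, h y hy]

lemma energy_rec (n : ℕ) (u : ℝ × ℝ → ℝ) :
    Energy (n + 1) u = (5 / 3 : ℝ) * ∑ i : Fin 3, Energy n (u ∘ Fmap i) := by
  classical
  letI : Finite {e : Sym2 (ℝ × ℝ) // IsEdge n e} := edge_subtype_finite n
  letI : Finite {e : Sym2 (ℝ × ℝ) // IsEdge (n+1) e} := edge_subtype_finite (n+1)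
  letI : Fintype {e : Sym2 (ℝ × ℝ) // IsEdge n e} := Fintype.ofFinite _
  letI : Fintype {e : Sym2 (ℝ × ℝ) // IsEdge (n+1) e} := Fintype.ofFinite _
  -- the bijection
  have hEdgeMap : ∀ (i : Fin 3) (e : Sym2 (ℝ × ℝ)), IsEdge n e →
      IsEdge (n+1) (Sym2.map (Fmap i) e) := by
    rintro i e ⟨x, y, ⟨hxy, w, hw, ⟨a, hx⟩, ⟨b, hy⟩⟩, rfl⟩
    refine ⟨Fmap i x, Fmap i y, ⟨fun h => hxy (Fmap_inj i h), i :: w, by simp [hw],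
      ⟨a, by rw [hx]; rfl⟩, ⟨b, by rw [hy]; rfl⟩⟩, by rw [Sym2.map_pair_eq]⟩
  set Φ : (Fin 3) × {e : Sym2 (ℝ × ℝ) // IsEdge n e} → {e : Sym2 (ℝ × ℝ) // IsEdge (n+1) e} :=
    fun p => ⟨Sym2.map (Fmap p.1) (p.2 : Sym2 (ℝ × ℝ)), hEdgeMap p.1 _ p.2.2⟩ with hΦ
  have hbij : Function.Bijective Φ := by
    constructor
    · rintro ⟨i, e⟩ ⟨j, e'⟩ h
      have h' : Sym2.map (Fmap i) (e : Sym2 (ℝ × ℝ)) = Sym2.map (Fmap j) (e' : Sym2 (ℝ × ℝ)) := by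
        simpa [hΦ] using congrArg Subtype.val h
      by_cases hij : i = j
      · subst hij
        have he : e = e' := Subtype.ext (Sym2.map.injective (Fmap_inj i) h')
        rw [he]
      · exfalso
        obtain ⟨x, y, hx, hy, hxy, hxy'⟩ := edge_in_V e.2
        obtain ⟨x', y', hx', hy', hxy2, hxy2'⟩ := edge_in_V e'.2
        rw [hxy', hxy2', Sym2.map_pair_eq, Sym2.map_pair_eq, Sym2.eq_iff] at h'
        have hover : ∀ a b : ℝ × ℝ, a ∈ V n → b ∈ V n → Fmap i a = Fmap j b →
            Fmap i a = (2⁻¹ : ℝ) • (q i + q j) := by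
          intro a b ha hb hab
          apply overlap hij (inT_Fmap i (inT_V ha))
          · exact lam_Fmap_self i (inT_V ha)
          · rw [hab]; exact lam_Fmap_self j (inT_V hb)
        have h1 : Fmap i x = (2⁻¹ : ℝ) • (q i + q j) := by
          rcases h' with ⟨h1, _⟩ | ⟨h1, _⟩
          · exact hover x x' hx hx' h1
          · exact hover x y' hx hy' h1
        have h2 : Fmap i y = (2⁻¹ : ℝ) • (q i + q j) := by
          rcases h' with ⟨_, h2⟩ | ⟨_, h2⟩
          · exact hover y y' hy hy' h2
          · exact hover y x' hy hx' h2
        exact hxy (Fmap_inj i (h1.trans h2.symm))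
    · rintro ⟨e, he⟩
      obtain ⟨x, y, ⟨hxy, w, hw, ⟨a, hx⟩, ⟨b, hy⟩⟩, rfl⟩ := he
      match w, hw with
      | (i :: w'), hw =>
        have hw' : w'.length = n := by simpa using hw
        refine ⟨⟨i, ⟨s(Fword w' (q a), Fword w' (q b)), ?_⟩⟩, ?_⟩
        · refine ⟨_, _, ⟨?_, w', hw', ⟨a, rfl⟩, ⟨b, rfl⟩⟩, rfl⟩
          intro h
          apply hxy
          rw [hx, hy, Fword_cons]
          simp [h]
        · apply Subtype.ext
          simp only [hΦ, Sym2.map_pair_eq]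
          rw [hx, hy, Fword_cons]
          simp [Function.comp]
  have hsum : ∑' e : {e : Sym2 (ℝ × ℝ) // IsEdge (n+1) e}, edgeVal u (e : Sym2 (ℝ × ℝ))
      = ∑ i : Fin 3, ∑' e : {e : Sym2 (ℝ × ℝ) // IsEdge n e}, edgeVal (u ∘ Fmap i) (e : Sym2 (ℝ × ℝ)) := by
    rw [tsum_fintype]
    have : ∀ e : {e : Sym2 (ℝ × ℝ) // IsEdge n e}, ∀ i : Fin 3,
        edgeVal (u ∘ Fmap i) (e : Sym2 (ℝ × ℝ)) = edgeVal u (Φ (i, e) : Sym2 (ℝ × ℝ)) := by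
      rintro ⟨e, he⟩ i
      induction e using Sym2.ind with
      | _ x y => simp [hΦ, Sym2.map_pair_eq, edgeVal_mk]
    calc ∑ e : {e : Sym2 (ℝ × ℝ) // IsEdge (n+1) e}, edgeVal u (e : Sym2 (ℝ × ℝ))
        = ∑ p : (Fin 3) × {e : Sym2 (ℝ × ℝ) // IsEdge n e},
            edgeVal (u ∘ Fmap p.1) (p.2 : Sym2 (ℝ × ℝ)) :=
          (Fintype.sum_bijective Φ hbij
            (fun p => edgeVal (u ∘ Fmap p.1) (p.2 : Sym2 (ℝ × ℝ)))
            (fun e => edgeVal u (e : Sym2 (ℝ × ℝ)))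
            (fun p => this p.2 p.1)).symm
    _ = ∑ i : Fin 3, ∑ e : {e : Sym2 (ℝ × ℝ) // IsEdge n e},
            edgeVal (u ∘ Fmap i) (e : Sym2 (ℝ × ℝ)) := Fintype.sum_prod_type _
    _ = ∑ i : Fin 3, ∑' e : {e : Sym2 (ℝ × ℝ) // IsEdge n e},
            edgeVal (u ∘ Fmap i) (e : Sym2 (ℝ × ℝ)) := by
          refine Finset.sum_congr rfl fun i _ => ?_
          rw [tsum_fintype]
  rw [Energy, hsum, Finset.mul_sum, Finset.mul_sum]
  refine Finset.sum_congr rfl fun i _ => ?_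
  rw [Energy]
  ring

/-! ### Q basics -/

def Qset (m : ℕ) (E : Set (ℝ × ℝ)) (v : ℝ × ℝ → ℝ) : Set ℝ :=
  {r | ∃ u : ℝ × ℝ → ℝ, (∀ x ∈ E, u x = v x) ∧ r = Energy m u}

lemma Q_eq_sInf (m : ℕ) (E : Set (ℝ × ℝ)) (v : ℝ × ℝ → ℝ) :
    Q m E v = sInf (Qset m E v) := rfl

lemma Qset_nonempty (m : ℕ) (E : Set (ℝ × ℝ)) (v : ℝ × ℝ → ℝ) :
    (Qset m E v).Nonempty :=
  ⟨Energy m v, v, fun _ _ => rfl, rfl⟩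

lemma Qset_bddBelow (m : ℕ) (E : Set (ℝ × ℝ)) (v : ℝ × ℝ → ℝ) :
    BddBelow (Qset m E v) := by
  refine ⟨0, ?_⟩
  rintro r ⟨u, -, rfl⟩
  exact energy_nonneg m u

lemma Q_nonneg (m : ℕ) (E : Set (ℝ × ℝ)) (v : ℝ × ℝ → ℝ) : 0 ≤ Q m E v :=
  le_csInf (Qset_nonempty m E v) (by rintro r ⟨u, -, rfl⟩; exact energy_nonneg m u)

lemma Q_congr {m : ℕ} {E : Set (ℝ × ℝ)} {v v' : ℝ × ℝ → ℝ}
    (h : ∀ z ∈ E, v z = v' z) : Q m E v = Q m E v' := by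
  rw [Q_eq_sInf, Q_eq_sInf]
  congr 1
  ext r
  constructor
  · rintro ⟨u, hu, rfl⟩
    exact ⟨u, fun x hx => (hu x hx).trans (h x hx), rfl⟩
  · rintro ⟨u, hu, rfl⟩
    exact ⟨u, fun x hx => (hu x hx).trans (h x hx).symm, rfl⟩

lemma Q_zero {m : ℕ} {E : Set (ℝ × ℝ)} {v : ℝ × ℝ → ℝ}
    (h : ∀ z ∈ E, v z = 0) : Q m E v = 0 := by
  apply le_antisymm
  · apply csInf_le (Qset_bddBelow m E v)
    exact ⟨fun _ => 0, fun x hx => (h x hx).symm, (energy_zero m).symm⟩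
  · exact Q_nonneg m E v

/-! ### The gluing construction and the decoupling of Q -/

/-- The glued function: on the cell `F_i(T)` it is `u_i ∘ F_i⁻¹`. -/
def glue (u : Fin 3 → ℝ × ℝ → ℝ) (z : ℝ × ℝ) : ℝ :=
  if 1/2 ≤ lam 0 z then u 0 (Ginv 0 z)
  else if 1/2 ≤ lam 1 z then u 1 (Ginv 1 z)
  else if 1/2 ≤ lam 2 z then u 2 (Ginv 2 z)
  else 0

lemma glue_eq {E : Set (ℝ × ℝ)} (hq : ∀ i, q i ∈ E) {v : ℝ × ℝ → ℝ}
    {u : Fin 3 → ℝ × ℝ → ℝ} (hu : ∀ i, ∀ x ∈ E, u i x = v (Fmap i x))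
    (i : Fin 3) {a : ℝ × ℝ} (ha : inT a) :
    glue u (Fmap i a) = u i a := by
  have hself := lam_Fmap_self i ha
  have hT : inT (Fmap i a) := inT_Fmap i ha
  have key : ∀ j : Fin 3, 1/2 ≤ lam j (Fmap i a) → u j (Ginv j (Fmap i a)) = u i a := by
    intro j hj
    by_cases hji : j = i
    · subst hji; rw [Ginv_Fmap]
    · have hmid : Fmap i a = (2⁻¹ : ℝ) • (q i + q j) :=
        overlap (fun h => hji (h.symm)) hT hself hj
      have hmid' : Fmap i a = Fmap j (q i) := by
        rw [hmid, Fmap]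
      have hmid'' : Fmap i a = Fmap i (q j) := by
        rw [hmid, Fmap, add_comm]
      have ha' : a = q j := Fmap_inj i hmid''
      have hg : Ginv j (Fmap i a) = q i := by rw [hmid', Ginv_Fmap]
      rw [hg, ha', hu j (q i) (hq i), hu i (q j) (hq j), ← hmid', ← hmid'']
  rw [glue]
  split_ifs with h0 h1 h2
  · exact key 0 h0
  · exact key 1 h1
  · exact key 2 h2
  · exfalso
    have key' : ∀ j : Fin 3, j = 0 ∨ j = 1 ∨ j = 2 := by decide
    rcases key' i with rfl | rfl | rfl
    · exact h0 hself
    · exact h1 hself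
    · exact h2 hself

lemma Q_decouple (n : ℕ) {E : Set (ℝ × ℝ)} (hq : ∀ i, q i ∈ E)
    (hT : ∀ z ∈ E, inT z) (v : ℝ × ℝ → ℝ) :
    Q (n + 1) (⋃ i : Fin 3, Fmap i '' E) v
      = (5 / 3 : ℝ) * ∑ i : Fin 3, Q n E (v ∘ Fmap i) := by
  set U : Set (ℝ × ℝ) := ⋃ i : Fin 3, Fmap i '' E with hU
  apply le_antisymm
  · -- upper bound: glue approximate minimizers
    have hmain : ∀ ε : ℝ, 0 < ε →
        Q (n + 1) U v ≤ (5 / 3 : ℝ) * ∑ i : Fin 3, Q n E (v ∘ Fmap i) + 5 * ε := by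
      intro ε hε
      have hex : ∀ i : Fin 3, ∃ u : ℝ × ℝ → ℝ, (∀ x ∈ E, u x = v (Fmap i x)) ∧
          Energy n u < Q n E (v ∘ Fmap i) + ε := by
        intro i
        obtain ⟨r, ⟨u, hu, rfl⟩, hr⟩ :=
          Real.lt_sInf_add_pos (Qset_nonempty n E (v ∘ Fmap i)) hε
        exact ⟨u, fun x hx => hu x hx, hr⟩
      choose u hu hulow using hex
      set g := glue u with hg
      have hfeas : ∀ x ∈ U, g x = v x := by
        intro x hx
        obtain ⟨i, a, ha, rfl⟩ := Set.mem_iUnion.1 hx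
        rw [hg, glue_eq hq hu i (hT a ha), hu i a ha]
      have hgF : ∀ i : Fin 3, Energy n (g ∘ Fmap i) = Energy n (u i) := by
        intro i
        apply energy_congr
        intro z hz
        exact glue_eq hq hu i (inT_V hz)
      have hQle : Q (n + 1) U v ≤ Energy (n + 1) g :=
        csInf_le (Qset_bddBelow _ _ _) ⟨g, hfeas, rfl⟩
      have hEg : Energy (n + 1) g = (5 / 3 : ℝ) * ∑ i : Fin 3, Energy n (u i) := by
        rw [energy_rec]
        congr 1
        exact Finset.sum_congr rfl fun i _ => hgF i
      have hsumlt : ∑ i : Fin 3, Energy n (u i)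
          ≤ ∑ i : Fin 3, (Q n E (v ∘ Fmap i) + ε) :=
        Finset.sum_le_sum fun i _ => le_of_lt (hulow i)
      have : Energy (n + 1) g ≤ (5 / 3 : ℝ) * ∑ i : Fin 3, Q n E (v ∘ Fmap i) + 5 * ε := by
        rw [hEg]
        have h3 : ∑ i : Fin 3, (Q n E (v ∘ Fmap i) + ε)
            = (∑ i : Fin 3, Q n E (v ∘ Fmap i)) + 3 * ε := by
          rw [Finset.sum_add_distrib, Finset.sum_const, Finset.card_univ]
          simp [Fintype.card_fin]
          try ring
        calc (5 / 3 : ℝ) * ∑ i : Fin 3, Energy n (u i)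
            ≤ (5 / 3 : ℝ) * ((∑ i : Fin 3, Q n E (v ∘ Fmap i)) + 3 * ε) := by
              apply mul_le_mul_of_nonneg_left _ (by norm_num)
              rw [← h3]; exact hsumlt
          _ = (5 / 3 : ℝ) * (∑ i : Fin 3, Q n E (v ∘ Fmap i)) + 5 * ε := by ring
      exact hQle.trans this
    by_contra hcon
    push_neg at hcon
    set A := Q (n + 1) U v
    set B := (5 / 3 : ℝ) * ∑ i : Fin 3, Q n E (v ∘ Fmap i)
    have hε : (0 : ℝ) < (A - B) / 10 := by
      have : B < A := hcon
      linarith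
    have := hmain ((A - B) / 10) hε
    have hBA : B < A := hcon
    linarith
  · -- lower bound
    apply le_csInf (Qset_nonempty _ _ _)
    rintro r ⟨u, hu, rfl⟩
    rw [energy_rec]
    apply mul_le_mul_of_nonneg_left _ (by norm_num : (0:ℝ) ≤ 5/3)
    apply Finset.sum_le_sum
    intro i _
    apply csInf_le (Qset_bddBelow _ _ _)
    refine ⟨u ∘ Fmap i, ?_, rfl⟩
    intro x hx
    exact hu (Fmap i x) (Set.mem_iUnion.2 ⟨i, x, hx, rfl⟩)

/-! ### betaSet facts -/

lemma inT_beta0 {z : ℝ × ℝ} (hz : z ∈ beta0) : inT z := by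
  rcases hz with h | h | h | h | h | h <;> subst h
  · exact inT_q 0
  · exact inT_q 1
  · exact inT_q 2
  all_goals exact inT_Fmap _ (inT_Fmap _ (inT_q _))

lemma q_mem_beta0 (i : Fin 3) : q i ∈ beta0 := by
  fin_cases i
  · exact Or.inl rfl
  · exact Or.inr (Or.inl rfl)
  · exact Or.inr (Or.inr (Or.inl rfl))

lemma inT_betaSet (n : ℕ) : ∀ z ∈ betaSet n, inT z := by
  induction n with
  | zero => exact fun z hz => inT_beta0 hz
  | succ n ih =>
    intro z hz
    obtain ⟨i, a, ha, rfl⟩ := Set.mem_iUnion.1 hz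
    exact inT_Fmap i (ih a ha)

lemma q_mem_betaSet (n : ℕ) (i : Fin 3) : q i ∈ betaSet n := by
  induction n with
  | zero => exact q_mem_beta0 i
  | succ n ih =>
    exact Set.mem_iUnion.2 ⟨i, q i, ih, Fmap_q i⟩

lemma Fword_mem_betaSet {w : List (Fin 3)} {xt : ℝ × ℝ} (hxt : xt ∈ beta0) :
    Fword w xt ∈ betaSet w.length := by
  induction w with
  | nil => exact hxt
  | cons i w ih =>
    exact Set.mem_iUnion.2 ⟨i, Fword w xt, ih, rfl⟩

lemma Fword_inj (w : List (Fin 3)) : Function.Injective (Fword w) := by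
  induction w with
  | nil => exact fun a b h => h
  | cons i w ih => exact fun a b h => ih (Fmap_inj i h)

/-! ### Conductance lemmas -/

lemma ind_comp (j : Fin 3) (x : ℝ × ℝ) : ind x ∘ Fmap j = ind (Ginv j x) := by
  funext t
  show (if Fmap j t = x then (1:ℝ) else 0) = if t = Ginv j x then 1 else 0
  congr 1
  simp only [eq_iff_iff]
  constructor
  · intro h; rw [← h, Ginv_Fmap]
  · intro h; rw [h, Fmap_Ginv]

lemma ind_add_comp (j : Fin 3) (x y : ℝ × ℝ) :
    (ind x + ind y) ∘ Fmap j = ind (Ginv j x) + ind (Ginv j y) := by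
  funext t
  show ind x (Fmap j t) + ind y (Fmap j t) = _
  rw [show ind x (Fmap j t) = (ind x ∘ Fmap j) t from rfl,
    show ind y (Fmap j t) = (ind y ∘ Fmap j) t from rfl, ind_comp, ind_comp]
  rfl

lemma cond_zero_left {m : ℕ} {E : Set (ℝ × ℝ)} {a b : ℝ × ℝ} (ha : a ∉ E) :
    cond m E a b = 0 := by
  have h1 : Q m E (ind a) = 0 := by
    apply Q_zero
    intro z hz
    exact if_neg (by rintro rfl; exact ha hz)
  have h2 : Q m E (ind a + ind b) = Q m E (ind b) := by
    apply Q_congr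
    intro z hz
    show ind a z + ind b z = ind b z
    have h0 : ind a z = 0 := if_neg (by rintro rfl; exact ha hz)
    rw [h0, zero_add]
  rw [cond, h1, h2]
  ring

lemma cond_zero_right {m : ℕ} {E : Set (ℝ × ℝ)} {a b : ℝ × ℝ} (hb : b ∉ E) :
    cond m E a b = 0 := by
  have h1 : Q m E (ind b) = 0 := by
    apply Q_zero
    intro z hz
    exact if_neg (by rintro rfl; exact hb hz)
  have h2 : Q m E (ind a + ind b) = Q m E (ind a) := by
    apply Q_congr
    intro z hz
    show ind a z + ind b z = ind a z
    have h0 : ind b z = 0 := if_neg (by rintro rfl; exact hb hz)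
    rw [h0, add_zero]
  rw [cond, h1, h2]
  ring

lemma cond_rec (n : ℕ) (x y : ℝ × ℝ) :
    cond (n + 1 + 2) (betaSet (n + 1)) x y
      = (5 / 3 : ℝ) * ∑ j : Fin 3, cond (n + 2) (betaSet n) (Ginv j x) (Ginv j y) := by
  have hq' : ∀ i, q i ∈ betaSet n := q_mem_betaSet n
  have hT' : ∀ z ∈ betaSet n, inT z := inT_betaSet n
  have hQ : ∀ f : ℝ × ℝ → ℝ, Q (n + 1 + 2) (betaSet (n + 1)) f
      = (5 / 3 : ℝ) * ∑ j : Fin 3, Q (n + 2) (betaSet n) (f ∘ Fmap j) := by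
    intro f
    show Q (n + 2 + 1) (⋃ i : Fin 3, Fmap i '' betaSet n) f = _
    exact Q_decouple (n + 2) hq' hT' f
  have Hx := hQ (ind x)
  have Hy := hQ (ind y)
  have Hxy := hQ (ind x + ind y)
  simp only [ind_comp, ind_add_comp] at Hx Hy Hxy
  simp only [cond, Hx, Hy, Hxy, Finset.mul_sum, ← Finset.sum_add_distrib,
    ← Finset.sum_sub_distrib, Finset.sum_div]
  apply Finset.sum_congr rfl
  intro j _
  ring

/-! ### The main induction -/

theorem aux_main : ∀ m : ℕ, ∀ x y : ℝ × ℝ, x ∈ betaSet m → y ∈ betaSet m → x ≠ y →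
    ((¬ ∃ w : List (Fin 3), w.length = m ∧ x ∈ Fword w '' beta0 ∧ y ∈ Fword w '' beta0) →
      cond (m + 2) (betaSet m) x y = 0) ∧
    (∀ (w : List (Fin 3)) (xt yt : ℝ × ℝ), w.length = m →
      xt ∈ beta0 → yt ∈ beta0 → xt ≠ yt → x = Fword w xt → y = Fword w yt →
      cond (m + 2) (betaSet m) x y = (5 / 3 : ℝ) ^ m * cond 2 beta0 xt yt) := by
  intro m
  induction m with
  | zero =>
    intro x y hx hy hxy
    constructor
    · intro hne
      exact absurd ⟨[], rfl, ⟨x, hx, rfl⟩, ⟨y, hy, rfl⟩⟩ hne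
    · intro w xt yt hw hxt hyt hne hxe hye
      rw [List.length_eq_zero_iff] at hw
      subst hw
      rw [Fword_nil] at hxe hye
      simp only [id] at hxe hye
      subst hxe; subst hye
      simp [betaSet]
  | succ n ih =>
    intro x y hx hy hxy
    have hrec := cond_rec n x y
    constructor
    · -- part (i)
      intro hne
      rw [hrec]
      have hz : ∀ j : Fin 3, cond (n + 2) (betaSet n) (Ginv j x) (Ginv j y) = 0 := by
        intro j
        by_cases hxj : Ginv j x ∈ betaSet n
        · by_cases hyj : Ginv j y ∈ betaSet n
          · have hne' : Ginv j x ≠ Ginv j y := fun h => hxy (Ginv_inj j h)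
            apply (ih (Ginv j x) (Ginv j y) hxj hyj hne').1
            rintro ⟨w', hw', ⟨xt, hxt, hxe⟩, ⟨yt, hyt, hye⟩⟩
            apply hne
            refine ⟨j :: w', by simp [hw'], ⟨xt, hxt, ?_⟩, ⟨yt, hyt, ?_⟩⟩
            · rw [Fword_cons, Function.comp_apply, hxe, Fmap_Ginv]
            · rw [Fword_cons, Function.comp_apply, hye, Fmap_Ginv]
          · exact cond_zero_right hyj
        · exact cond_zero_left hxj
      rw [Finset.sum_eq_zero fun j _ => hz j, mul_zero]
    · -- part (ii)
      intro w xt yt hw hxt hyt hne hxe hye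
      match w, hw with
      | (i :: w'), hw =>
        have hw' : w'.length = n := by simpa using hw
        rw [Fword_cons, Function.comp_apply] at hxe hye
        have haT : inT (Fword w' xt) := inT_betaSet n _ (hw' ▸ Fword_mem_betaSet hxt)
        have hbT : inT (Fword w' yt) := inT_betaSet n _ (hw' ▸ Fword_mem_betaSet hyt)
        rw [hrec]
        rw [Finset.sum_eq_single_of_mem i (Finset.mem_univ i) ?_]
        · have hgx : Ginv i x = Fword w' xt := by rw [hxe, Ginv_Fmap]
          have hgy : Ginv i y = Fword w' yt := by rw [hye, Ginv_Fmap]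
          have hmemx : Ginv i x ∈ betaSet n := by
            rw [hgx]; exact hw' ▸ Fword_mem_betaSet hxt
          have hmemy : Ginv i y ∈ betaSet n := by
            rw [hgy]; exact hw' ▸ Fword_mem_betaSet hyt
          have hne2 : Ginv i x ≠ Ginv i y := fun h => hxy (Ginv_inj i h)
          have := (ih (Ginv i x) (Ginv i y) hmemx hmemy hne2).2 w' xt yt hw'
            hxt hyt hne hgx hgy
          rw [this, pow_succ]
          ring
        · -- other cells contribute 0
          intro j _ hji
          by_cases hxj : Ginv j x ∈ betaSet n
          · by_cases hyj : Ginv j y ∈ betaSet n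
            · exfalso
              have hij : i ≠ j := fun h => hji h.symm
              have hxT : inT x := by rw [hxe]; exact inT_Fmap i haT
              have hyT : inT y := by rw [hye]; exact inT_Fmap i hbT
              have hlix : 1/2 ≤ lam i x := by
                rw [hxe]; exact lam_Fmap_self i haT
              have hljx : 1/2 ≤ lam j x := by
                conv_rhs => rw [← Fmap_Ginv j x]
                exact lam_Fmap_self j (inT_betaSet n _ hxj)
              have hliy : 1/2 ≤ lam i y := by
                rw [hye]; exact lam_Fmap_self i hbT
              have hljy : 1/2 ≤ lam j y := by
                conv_rhs => rw [← Fmap_Ginv j y]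
                exact lam_Fmap_self j (inT_betaSet n _ hyj)
              have h1 : x = (2⁻¹ : ℝ) • (q i + q j) := overlap hij hxT hlix hljx
              have h2 : y = (2⁻¹ : ℝ) • (q i + q j) := overlap hij hyT hliy hljy
              exact hxy (h1.trans h2.symm)
            · exact cond_zero_right hyj
          · exact cond_zero_left hxj


/-- For `m ≥ 1` and distinct `x, y ∈ β_m`, with conductances computed at
level `m + 2`: (i) if no word `w` of length `m` has `{x, y} ⊆ F_w(β₀)` then
`c^{β_m}_{x,y} = 0`; (ii) if `x = F_w(x̃)`, `y = F_w(ỹ)` with `|w| = m` and distinct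
`x̃, ỹ ∈ β₀`, then `c^{β_m}_{x,y} = (5/3)^m c^{β₀}_{x̃,ỹ}`. -/
theorem stmt7 (m : ℕ) (hm : 1 ≤ m) (x y : ℝ × ℝ)
    (hx : x ∈ betaSet m) (hy : y ∈ betaSet m) (hxy : x ≠ y) :
    ((¬ ∃ w : List (Fin 3), w.length = m ∧ x ∈ Fword w '' beta0 ∧ y ∈ Fword w '' beta0) →
      cond (m + 2) (betaSet m) x y = 0) ∧
    (∀ (w : List (Fin 3)) (xt yt : ℝ × ℝ), w.length = m →
      xt ∈ beta0 → yt ∈ beta0 → xt ≠ yt → x = Fword w xt → y = Fword w yt →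
      cond (m + 2) (betaSet m) x y = (5 / 3 : ℝ) ^ m * cond 2 beta0 xt yt) :=
  aux_main m x y hx hy hxy

end SGPaper
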